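/- The boundary fusion relation holds: τ(r) K^W₁(z,r) L(z²,r) K^V₂(z) = r(ξz² − 1) K^W(q^{-1}z, q^{-1}r) τ(r) as maps W ⊗ V → W. -/

import Mathlib

noncomputable section

open Finsupp Matrix

/-- The infinite-dimensional space `W = ⊕_{j≥0} ℂ w^j`. -/
abbrev Wsp : Type := ℕ →₀ ℂ

abbrev EndW : Type := Module.End ℂ Wsp

/-- The basis vector `w^j`. -/
def wv (j : ℕ) : Wsp := Finsupp.single j 1

/-- The linear operator on `W` determined by its values on the basis. -/
def mkOp (g : ℕ → Wsp) : EndW :=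
  Finsupp.lsum ℂ fun j => LinearMap.toSpanSingleton ℂ Wsp (g j)

/-- The annihilation operator `a`. -/
def opA : EndW := mkOp fun j => match j with | 0 => 0 | i + 1 => wv i

/-- The creation operator `a†`. -/
def opAdag (q : ℂ) : EndW := mkOp fun j => (1 - q ^ (2 * (j + 1))) • wv (j + 1)

/-- The diagonal operator `f(D)`. -/
def opDiag (f : ℕ → ℂ) : EndW := mkOp fun j => f j • wv j

/-- The L-operator `L(z,r)` on `W ⊗ ℂ²`, written as a 2×2 matrix with entries in `End(W)`. -/
def Lmat (q z r : ℂ) : Matrix (Fin 2) (Fin 2) EndW :=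
  !![1, -(q⁻¹ * z) • opAdag q;
     -(q * z) • opA, opDiag fun j => 1 - q ^ (2 * (j + 1)) * z ^ 2] *
  !![r • opDiag (fun j => q ^ j), 0;
     0, opDiag fun j => (q ^ j)⁻¹]

/-- The infinite-dimensional K-matrix `K^W(z,r)`, acting diagonally on `W` by
`w^j ↦ (q r⁻¹)^j ∏_{i=1}^j (z² - q^{-2i} ξ) w^j`. -/
def KWop (q r ξ z : ℂ) : EndW :=
  opDiag fun j => (q * r⁻¹) ^ j * ∏ i ∈ Finset.range j, (z ^ 2 - (q⁻¹) ^ (2 * (i + 1)) * ξ)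

/-- An operator `X` on `W`, acting in the first factor of `W ⊗ ℂ²`. -/
def d2 (X : EndW) : Matrix (Fin 2) (Fin 2) EndW := !![X, 0; 0, X]

/-- The diagonal K-matrix `K^V(z) = diag(ξz²-1, ξ-z²)`, acting in the second factor of
`W ⊗ ℂ²`. -/
def KVd2 (ξ z : ℂ) : Matrix (Fin 2) (Fin 2) EndW :=
  !![(ξ * z ^ 2 - 1) • 1, 0; 0, (ξ - z ^ 2) • 1]

/-- The components of the fusion intertwiner `ι(r) : W → W ⊗ V`,
`ι(r)(w^j) = (q^{-j-1} - q^{j+1}) w^{j+1} ⊗ v⁰ + q^{j+1} r w^j ⊗ v¹`. -/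
def iotaC (q r : ℂ) : Fin 2 → EndW :=
  ![mkOp fun j => ((q⁻¹) ^ (j + 1) - q ^ (j + 1)) • wv (j + 1),
    opDiag fun j => q ^ (j + 1) * r]

/-- The components of the fusion intertwiner `τ(r) : W ⊗ V → W`,
`τ(r)(w^j ⊗ v⁰) = q^j w^j`, `τ(r)(w^j ⊗ v¹) = (q^{j+1} - q^{-j-1}) r⁻¹ w^{j+1}`. -/
def tauC (q r : ℂ) : Fin 2 → EndW :=
  ![opDiag fun j => q ^ j,
    mkOp fun j => ((q ^ (j + 1) - (q⁻¹) ^ (j + 1)) * r⁻¹) • wv (j + 1)]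

lemma mkOp_wv (g : ℕ → Wsp) (j : ℕ) : mkOp g (wv j) = g j := by
  simp [mkOp, wv]

lemma endW_ext {f g : EndW} (h : ∀ j, f (wv j) = g (wv j)) : f = g := by
  refine Finsupp.lhom_ext fun a b => ?_
  have : (Finsupp.single a b : Wsp) = b • wv a := by simp [wv, Finsupp.smul_single]
  rw [this, _root_.map_smul, _root_.map_smul, h a]

lemma opA_wv0 : opA (wv 0) = 0 := by simp [opA, mkOp_wv]
lemma opA_wvs (n : ℕ) : opA (wv (n + 1)) = wv n := by simp [opA, mkOp_wv]
lemma opAdag_wv (q : ℂ) (j : ℕ) : opAdag q (wv j) = (1 - q ^ (2 * (j + 1))) • wv (j + 1) := by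
  simp [opAdag, mkOp_wv]
lemma opDiag_wv (f : ℕ → ℂ) (j : ℕ) : opDiag f (wv j) = f j • wv j := by
  simp [opDiag, mkOp_wv]

lemma prodQ' (q z ξ : ℂ) (hq0 : q ≠ 0) (j : ℕ) :
    ∏ i ∈ Finset.range j, ((q⁻¹ * z) ^ 2 - (q ^ (2 * (i + 1)))⁻¹ * ξ)
      = ((q ^ 2)⁻¹) ^ j * ∏ i ∈ Finset.range j, (z ^ 2 - (q ^ (2 * i))⁻¹ * ξ) := by
  induction j with
  | zero => simp
  | succ n ih =>
    rw [Finset.prod_range_succ, Finset.prod_range_succ, ih]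
    set C := ∏ i ∈ Finset.range n, (z ^ 2 - (q ^ (2 * i))⁻¹ * ξ) with hC
    field_simp
    simp only [one_div, inv_pow]
    field_simp
    ring

lemma prodShift' (q z ξ : ℂ) (j : ℕ) :
    ∏ i ∈ Finset.range (j + 1), (z ^ 2 - (q ^ (2 * i))⁻¹ * ξ)
      = (z ^ 2 - ξ) * ∏ i ∈ Finset.range j, (z ^ 2 - (q ^ (2 * (i + 1)))⁻¹ * ξ) := by
  rw [Finset.prod_range_succ']
  norm_num [mul_comm]

set_option maxHeartbeats 2000000 in
/-- boundary fusion relation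
`τ(r) K^W₁(z,r) L(z²,r) K^V₂(z) = r(ξz²-1) K^W(q⁻¹z,q⁻¹r) τ(r)` as maps `W ⊗ V → W`. -/
theorem boundary_fusion_tau (q r ξ z : ℂ) (hq0 : q ≠ 0) (hq1 : q ≠ 1) (hqm1 : q ≠ -1)
    (hr : r ≠ 0) (hξ : ξ ≠ 0) (hz : z ≠ 0) :
    Matrix.vecMul (tauC q r) (d2 (KWop q r ξ z) * Lmat q (z ^ 2) r * KVd2 ξ z) =
      fun k => (r * (ξ * z ^ 2 - 1)) •
        (KWop q (q⁻¹ * r) ξ (q⁻¹ * z) * tauC q r k) := by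
  funext k
  have hmat : ∀ (K : EndW) (L : Matrix (Fin 2) (Fin 2) EndW) (c0 c1 : ℂ) (t : Fin 2 → EndW)
      (k : Fin 2),
      Matrix.vecMul t (d2 K * L * !![c0 • 1, 0; 0, c1 • 1]) k
        = (![c0, c1] k) • (t 0 * (K * L 0 k) + t 1 * (K * L 1 k)) := by
    intro K L c0 c1 t k
    fin_cases k <;>
      simp [Matrix.vecMul, Matrix.mul_apply, Fin.sum_univ_two, dotProduct, d2,
        mul_add, mul_smul_comm, smul_mul_assoc, mul_assoc]
  rw [show (KVd2 ξ z) = !![(ξ * z ^ 2 - 1) • 1, 0; 0, (ξ - z ^ 2) • 1] from rfl, hmat]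
  have hL : ∀ i k : Fin 2, (Lmat q (z ^ 2) r) i k =
      ![![r • ((1 : EndW) * opDiag fun j => q ^ j),
          -(q⁻¹ * z ^ 2) • (opAdag q * opDiag fun j => (q ^ j)⁻¹)],
        ![r • (-(q * z ^ 2) • (opA * opDiag fun j => q ^ j)),
          (opDiag fun j => 1 - q ^ (2 * (j + 1)) * (z ^ 2) ^ 2) * opDiag fun j => (q ^ j)⁻¹]] i k := by
    intro i k
    fin_cases i <;> fin_cases k <;>
      simp [Lmat, Matrix.mul_apply, Fin.sum_univ_two, mul_smul_comm, smul_mul_assoc]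
  simp only [hL]
  apply endW_ext
  intro j
  fin_cases k
  · cases j with
    | zero =>
      simp [tauC, KWop, Module.End.mul_apply, opA_wv0, opA_wvs, opAdag_wv,
        opDiag_wv, mkOp_wv, smul_smul, _root_.map_smul]
      ring_nf
    | succ n =>
      simp [tauC, KWop, Module.End.mul_apply, opA_wv0, opA_wvs, opAdag_wv,
        opDiag_wv, mkOp_wv, smul_smul, _root_.map_smul]
      rw [← neg_smul, ← add_smul]
      congr 1
      rw [prodQ' q z ξ hq0, prodShift', Finset.prod_range_succ]
      set C := ∏ x ∈ Finset.range n, (z ^ 2 - (q ^ (2 * (x + 1)))⁻¹ * ξ) with hC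
      field_simp
      simp only [div_pow, one_div, inv_pow]
      field_simp
      ring
  · simp [tauC, KWop, Module.End.mul_apply, opA_wv0, opA_wvs, opAdag_wv,
      opDiag_wv, mkOp_wv, smul_smul, _root_.map_smul]
    rw [← neg_smul, ← add_smul]
    congr 1
    rw [prodQ' q z ξ hq0, prodShift', Finset.prod_range_succ]
    set C := ∏ x ∈ Finset.range j, (z ^ 2 - (q ^ (2 * (x + 1)))⁻¹ * ξ) with hC
    field_simp [hq0, hr]
    simp only [div_pow, one_div, inv_pow]
    field_simp
    ring
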